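/- For every integer d ≥ 2 and every k ∈ ℕ, the index T of the terminal complete record satisfies P(T = k) = k^{-d} · ∏_{m = k+1}^{∞} (1 − m^{-d}). -/

import Mathlib

open MeasureTheory ProbabilityTheory Filter Topology

noncomputable section

/-- `X m` is a complete record: each of its components strictly exceeds the corresponding
component of all previous observations `X i`, `1 ≤ i < m`.  In particular `X 1` is a
complete record by convention (vacuously). -/
def IsCompleteRecord {Ω : Type*} {d : ℕ} (X : ℕ → Ω → Fin d → ℝ) (m : ℕ) (ω : Ω) : Prop :=
  ∀ i, 1 ≤ i → i < m → ∀ j, X i ω j < X m ω j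

/-- `T = sup {m ∈ ℕ : X m is a complete record}`, the index of the terminal complete
record (for `d ≥ 2` the set of complete-record indices is a.s. finite, so this is the
index of the last complete record; `sSup` of an infinite set of naturals is junk `0`). -/
def terminalRecordIndex {Ω : Type*} {d : ℕ} (X : ℕ → Ω → Fin d → ℝ) (ω : Ω) : ℕ :=
  sSup {m : ℕ | 1 ≤ m ∧ IsCompleteRecord X m ω}

open Finset Set ENNReal NNReal


/-- Permutations of `Fin n` having a "record" at every position `p` with `p+1 ∈ S`. -/
def recPerms (n : ℕ) (S : Finset ℕ) : Finset (Equiv.Perm (Fin n)) :=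
  Finset.univ.filter
    (fun τ => ∀ p : Fin n, (p : ℕ) + 1 ∈ S → ∀ i : Fin n, i < p → τ i < τ p)

lemma mem_recPerms {n : ℕ} {S : Finset ℕ} {τ : Equiv.Perm (Fin n)} :
    τ ∈ recPerms n S ↔ ∀ p : Fin n, (p : ℕ) + 1 ∈ S → ∀ i : Fin n, i < p → τ i < τ p := by
  simp [recPerms]

/-- The building map: `(v, τ) ↦` the permutation sending `last` to `v` and `castSucc i` to
`v.succAbove (τ i)`. -/
def snocFun {n : ℕ} (v : Fin (n + 1)) (τ : Equiv.Perm (Fin n)) : Fin (n + 1) → Fin (n + 1) :=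
  Fin.snoc (fun i => v.succAbove (τ i)) v

lemma snocFun_injective {n : ℕ} (v : Fin (n + 1)) (τ : Equiv.Perm (Fin n)) :
    Function.Injective (snocFun v τ) := by
  intro a b hab
  induction a using Fin.lastCases with
  | last =>
    induction b using Fin.lastCases with
    | last => rfl
    | cast j =>
      simp only [snocFun, Fin.snoc_last, Fin.snoc_castSucc] at hab
      exact absurd hab.symm (Fin.succAbove_ne v (τ j))
  | cast i =>
    induction b using Fin.lastCases with
    | last =>
      simp only [snocFun, Fin.snoc_last, Fin.snoc_castSucc] at hab
      exact absurd hab (Fin.succAbove_ne v (τ i))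
    | cast j =>
      simp only [snocFun, Fin.snoc_castSucc] at hab
      have := τ.injective (Fin.succAbove_right_injective hab)
      rw [this]

noncomputable def snocPerm {n : ℕ} (v : Fin (n + 1)) (τ : Equiv.Perm (Fin n)) : Equiv.Perm (Fin (n + 1)) :=
  Equiv.ofBijective _ (Finite.injective_iff_bijective.mp (snocFun_injective v τ))

@[simp] lemma snocPerm_last {n : ℕ} (v : Fin (n + 1)) (τ : Equiv.Perm (Fin n)) :
    snocPerm v τ (Fin.last n) = v := by
  simp [snocPerm, Equiv.ofBijective_apply, snocFun]

@[simp] lemma snocPerm_castSucc {n : ℕ} (v : Fin (n + 1)) (τ : Equiv.Perm (Fin n)) (i : Fin n) :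
    snocPerm v τ (Fin.castSucc i) = v.succAbove (τ i) := by
  simp [snocPerm, Equiv.ofBijective_apply, snocFun]

lemma snocPerm_surj {n : ℕ} (σ : Equiv.Perm (Fin (n + 1))) :
    ∃ v τ, snocPerm v τ = σ := by
  classical
  -- the map (v, τ) ↦ snocPerm v τ is injective between fintypes of equal card
  have hinj : Function.Injective
      (fun p : Fin (n + 1) × Equiv.Perm (Fin n) => snocPerm p.1 p.2) := by
    rintro ⟨v, τ⟩ ⟨v', τ'⟩ h
    simp only at h
    have hv : v = v' := by
      have := congrArg (fun e : Equiv.Perm (Fin (n+1)) => e (Fin.last n)) h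
      simpa using this
    subst hv
    have hτ : τ = τ' := by
      ext i
      have := congrArg (fun e : Equiv.Perm (Fin (n+1)) => e (Fin.castSucc i)) h
      simp only [snocPerm_castSucc] at this
      exact congrArg Fin.val (Fin.succAbove_right_injective this)
    rw [hτ]
  have hcard : Fintype.card (Fin (n + 1) × Equiv.Perm (Fin n)) =
      Fintype.card (Equiv.Perm (Fin (n + 1))) := by
    simp [Fintype.card_perm, Nat.factorial_succ]
  have hbij := (Fintype.bijective_iff_injective_and_card _).mpr ⟨hinj, hcard⟩
  obtain ⟨⟨v, τ⟩, hp⟩ := hbij.surjective σ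
  exact ⟨v, τ, hp⟩

lemma succAbove_forall_lt_iff {n : ℕ} (v : Fin (n + 1)) :
    (∀ u : Fin n, v.succAbove u < v) ↔ v = Fin.last n := by
  constructor
  · intro h
    by_contra hv
    have hlt : (v : ℕ) < n := by
      have := Fin.lt_last_iff_ne_last.mpr hv
      exact Nat.lt_of_lt_of_le this (by simp)
    set u : Fin n := ⟨v, hlt⟩ with hu
    have hle : v ≤ Fin.castSucc u := by
      simp [Fin.le_def, hu]
    have := Fin.succAbove_of_le_castSucc v u hle
    have h2 := h u
    rw [this] at h2
    have : (v : ℕ) + 1 < (v : ℕ) := by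
      simpa [Fin.lt_def, Fin.val_succ, hu] using h2
    omega
  · rintro rfl
    intro u
    rw [Fin.succAbove_last]
    exact Fin.castSucc_lt_last u

lemma snocPerm_mem_recPerms {n : ℕ} {S : Finset ℕ} (v : Fin (n + 1))
    (τ : Equiv.Perm (Fin n)) :
    snocPerm v τ ∈ recPerms (n + 1) S ↔
      ((n + 1 ∈ S → v = Fin.last n) ∧ τ ∈ recPerms n (S.erase (n + 1))) := by
  rw [mem_recPerms, mem_recPerms]
  constructor
  · intro h
    refine ⟨fun hn => ?_, fun q hq i hiq => ?_⟩
    · rw [← succAbove_forall_lt_iff v]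
      intro u
      have hl := h (Fin.last n) (by simpa using hn) (Fin.castSucc (τ.symm u))
        (Fin.castSucc_lt_last _)
      simpa using hl
    · have hq' : ((Fin.castSucc q : Fin (n+1)) : ℕ) + 1 ∈ S := by
        simpa using (Finset.mem_of_mem_erase hq)
      have := h (Fin.castSucc q) hq' (Fin.castSucc i) (by simpa using hiq)
      simp only [snocPerm_castSucc] at this
      exact (Fin.strictMono_succAbove v).lt_iff_lt.mp this
  · rintro ⟨hv, hτ⟩ p hp i hip
    induction p using Fin.lastCases with
    | last =>
      have hv' : v = Fin.last n := hv (by simpa using hp)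
      subst hv'
      have : i ≠ Fin.last n := Fin.ne_last_of_lt hip
      obtain ⟨i', rfl⟩ := Fin.eq_castSucc_of_ne_last this
      simp only [snocPerm_castSucc, snocPerm_last]
      rw [Fin.succAbove_last]
      exact Fin.castSucc_lt_last _
    | cast q =>
      have : i ≠ Fin.last n := Fin.ne_last_of_lt (lt_of_lt_of_le hip (Fin.le_last _))
      obtain ⟨i', rfl⟩ := Fin.eq_castSucc_of_ne_last this
      have hi'q : i' < q := by simpa using hip
      have hqS : (q : ℕ) + 1 ∈ S.erase (n + 1) := by
        refine Finset.mem_erase.mpr ⟨?_, by simpa using hp⟩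
        have := q.isLt; omega
      have := hτ q hqS i' hi'q
      simp only [snocPerm_castSucc]
      exact (Fin.strictMono_succAbove v) this

lemma recPerms_card_mul (n : ℕ) : ∀ S : Finset ℕ, S ⊆ Finset.Icc 1 n →
    (recPerms n S).card * ∏ m ∈ S, m = n.factorial := by
  induction n with
  | zero =>
    intro S hS
    have : S = ∅ := by
      rw [Finset.eq_empty_iff_forall_notMem]
      intro m hm
      have := hS hm
      simp at this
    subst this
    have h0 : recPerms 0 ∅ = Finset.univ := by
      rw [recPerms, Finset.filter_true_of_mem]
      intro τ _ p
      exact p.elim0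
    rw [h0]
    simp [Finset.card_univ]
  | succ n ih =>
    intro S hS
    classical
    have hS' : S.erase (n + 1) ⊆ Finset.Icc 1 n := by
      intro m hm
      have h1 := Finset.mem_of_mem_erase hm
      have h2 := Finset.ne_of_mem_erase hm
      have := hS h1
      simp only [Finset.mem_Icc] at this ⊢
      omega
    -- card identity via the bijection snocPerm
    have hcard : (recPerms (n + 1) S).card =
        ((if n + 1 ∈ S then ({Fin.last n} : Finset (Fin (n+1))) else Finset.univ) ×ˢ
          recPerms n (S.erase (n + 1))).card := by
      refine (Finset.card_bij (fun p _ => snocPerm p.1 p.2) ?_ ?_ ?_).symm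
      · rintro ⟨v, τ⟩ hp
        rw [Finset.mem_product] at hp
        refine (snocPerm_mem_recPerms v τ).mpr ⟨?_, hp.2⟩
        intro hn
        have := hp.1
        rw [if_pos hn] at this
        simpa using this
      · rintro ⟨v, τ⟩ hp ⟨v', τ'⟩ hp' h
        simp only at h
        have hv : v = v' := by
          have := congrArg (fun e : Equiv.Perm (Fin (n+1)) => e (Fin.last n)) h
          simpa using this
        subst hv
        have : τ = τ' := by
          ext i
          have := congrArg (fun e : Equiv.Perm (Fin (n+1)) => e (Fin.castSucc i)) h
          simp only [snocPerm_castSucc] at this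
          exact congrArg Fin.val (Fin.succAbove_right_injective this)
        rw [this]
      · intro σ hσ
        obtain ⟨v, τ, rfl⟩ := snocPerm_surj σ
        obtain ⟨h1, h2⟩ := (snocPerm_mem_recPerms v τ).mp hσ
        refine ⟨⟨v, τ⟩, ?_, rfl⟩
        rw [Finset.mem_product]
        refine ⟨?_, h2⟩
        by_cases hn : n + 1 ∈ S
        · rw [if_pos hn]; simp [h1 hn]
        · rw [if_neg hn]; simp
    rw [hcard, Finset.card_product]
    by_cases hn : n + 1 ∈ S
    · rw [if_pos hn]
      have hprod : ∏ m ∈ S, m = (n + 1) * ∏ m ∈ S.erase (n + 1), m :=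
        (Finset.mul_prod_erase S id hn).symm
      rw [hprod, Finset.card_singleton]
      have := ih _ hS'
      calc 1 * (recPerms n (S.erase (n+1))).card * ((n + 1) * ∏ m ∈ S.erase (n + 1), m)
          = (n + 1) * ((recPerms n (S.erase (n+1))).card * ∏ m ∈ S.erase (n + 1), m) := by ring
        _ = (n + 1) * n.factorial := by rw [this]
        _ = (n + 1).factorial := (Nat.factorial_succ n).symm
    · rw [if_neg hn]
      have herase : S.erase (n + 1) = S := Finset.erase_eq_of_notMem hn
      rw [herase]
      have := ih _ hS'
      rw [herase] at this
      calc (Finset.univ : Finset (Fin (n+1))).card * (recPerms n S).card * ∏ m ∈ S, m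
          = (n + 1) * ((recPerms n S).card * ∏ m ∈ S, m) := by
            rw [Finset.card_univ, Fintype.card_fin]; ring
        _ = (n + 1) * n.factorial := by rw [this]
        _ = (n + 1).factorial := (Nat.factorial_succ n).symm

/-- The set of tuples strictly increasing along the permutation `τ`. -/
def ordSet (n : ℕ) (τ : Equiv.Perm (Fin n)) : Set (Fin n → ℝ) := {y | StrictMono (y ∘ τ)}

/-- The set of tuples having a record at every position `p` with `p + 1 ∈ S`. -/
def recEvent (n : ℕ) (S : Finset ℕ) : Set (Fin n → ℝ) :=
  {y | ∀ p : Fin n, (p : ℕ) + 1 ∈ S → ∀ i : Fin n, i < p → y i < y p}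

lemma measurableSet_ordSet (n : ℕ) (τ : Equiv.Perm (Fin n)) :
    MeasurableSet (ordSet n τ) := by
  have : ordSet n τ = ⋂ (a : Fin n), ⋂ (b : Fin n), ⋂ (_ : a < b),
      {y : Fin n → ℝ | y (τ a) < y (τ b)} := by
    ext y
    simp only [ordSet, StrictMono, Set.mem_setOf_eq, Set.mem_iInter, Function.comp]
  rw [this]
  exact MeasurableSet.iInter fun a => MeasurableSet.iInter fun b => MeasurableSet.iInter
    fun _ => measurableSet_lt (measurable_pi_apply _) (measurable_pi_apply _)

lemma measurableSet_recEvent (n : ℕ) (S : Finset ℕ) : MeasurableSet (recEvent n S) := by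
  have : recEvent n S = ⋂ (p : Fin n), ⋂ (_ : (p : ℕ) + 1 ∈ S), ⋂ (i : Fin n), ⋂ (_ : i < p),
      {y : Fin n → ℝ | y i < y p} := by
    ext y; simp only [recEvent, Set.mem_setOf_eq, Set.mem_iInter]
  rw [this]
  exact MeasurableSet.iInter fun p => MeasurableSet.iInter fun _ => MeasurableSet.iInter
    fun i => MeasurableSet.iInter fun _ =>
      measurableSet_lt (measurable_pi_apply _) (measurable_pi_apply _)

section OneDim

variable (μ : Measure ℝ) (n : ℕ)

lemma measure_eval_eq_eval [IsProbabilityMeasure μ] [NullSingletonClass μ] (i j : Fin n) (hij : i ≠ j) :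
    Measure.pi (fun _ : Fin n => μ) {y : Fin n → ℝ | y i = y j} = 0 := by
  classical
  set g : (Fin n → ℝ) → ℝ × ℝ := fun y => (y i, y j) with hg
  have hgmeas : Measurable g := (measurable_pi_apply i).prodMk (measurable_pi_apply j)
  have hmap : (Measure.pi (fun _ : Fin n => μ)).map g = μ.prod μ := by
    refine (Measure.prod_eq ?_).symm
    intro s t hs ht
    rw [Measure.map_apply hgmeas (hs.prod ht)]
    have hpre : g ⁻¹' (s ×ˢ t) =
        Set.pi Set.univ (fun l => if l = i then s else if l = j then t else Set.univ) := by
      ext y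
      simp only [hg, Set.mem_preimage, Set.mem_prod, Set.mem_pi, Set.mem_univ, true_implies]
      constructor
      · rintro ⟨h1, h2⟩ l
        split_ifs with h h'
        · subst h; exact h1
        · subst h'; exact h2
        · trivial
      · intro h
        have h1 := h i
        have h2 := h j
        rw [if_pos rfl] at h1
        rw [if_neg hij.symm, if_pos rfl] at h2
        exact ⟨h1, h2⟩
    rw [hpre, Measure.pi_pi]
    have hval : ∀ l : Fin n, μ (if l = i then s else if l = j then t else Set.univ)
        = (if l = i then μ s else if l = j then μ t else 1) := by
      intro l; split_ifs <;> simp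
    simp_rw [hval]
    rw [← Finset.prod_subset (Finset.subset_univ ({i, j} : Finset (Fin n)))
      (by intro x _ hx
          simp only [Finset.mem_insert, Finset.mem_singleton, not_or] at hx
          rw [if_neg hx.1, if_neg hx.2])]
    rw [Finset.prod_pair hij]
    rw [if_pos rfl, if_neg hij.symm, if_pos rfl]
  have hdiag : MeasurableSet (Set.diagonal ℝ) := isClosed_diagonal.measurableSet
  have : {y : Fin n → ℝ | y i = y j} = g ⁻¹' (Set.diagonal ℝ) := by
    ext y; simp [hg, Set.diagonal, eq_comm]
  rw [this, ← Measure.map_apply hgmeas hdiag, hmap]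
  rw [Measure.prod_apply hdiag]
  have hslice : ∀ x : ℝ, (Prod.mk x ⁻¹' Set.diagonal ℝ) = {x} := by
    intro x; ext y; simp [Set.diagonal, eq_comm]
  simp only [hslice, measure_singleton]
  simp

lemma measure_not_injective [IsProbabilityMeasure μ] [NullSingletonClass μ] :
    Measure.pi (fun _ : Fin n => μ) {y : Fin n → ℝ | ¬ Function.Injective y} = 0 := by
  have hsub : {y : Fin n → ℝ | ¬ Function.Injective y} ⊆
      ⋃ (i : Fin n), ⋃ (j : Fin n), ⋃ (_ : i ≠ j), {y : Fin n → ℝ | y i = y j} := by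
    intro y hy
    simp only [Set.mem_setOf_eq, Function.Injective, not_forall] at hy
    obtain ⟨i, j, hij, hne⟩ := hy
    exact Set.mem_iUnion.mpr ⟨i, Set.mem_iUnion.mpr ⟨j, Set.mem_iUnion.mpr ⟨hne, hij⟩⟩⟩
  refine measure_mono_null hsub ?_
  exact measure_iUnion_null fun i => measure_iUnion_null fun j =>
    measure_iUnion_null fun hij => measure_eval_eq_eval μ n i j hij

lemma map_comp_perm [IsProbabilityMeasure μ] (τ : Equiv.Perm (Fin n)) :
    (Measure.pi (fun _ : Fin n => μ)).map (fun y => y ∘ τ) = Measure.pi (fun _ : Fin n => μ) := by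
  have hmeas : Measurable (fun y : Fin n → ℝ => y ∘ τ) :=
    measurable_pi_lambda _ (fun i => measurable_pi_apply _)
  refine (Measure.pi_eq ?_).symm
  intro A hA
  rw [Measure.map_apply hmeas (MeasurableSet.univ_pi hA)]
  have hpre : (fun y : Fin n → ℝ => y ∘ τ) ⁻¹' (Set.pi Set.univ A) =
      Set.pi Set.univ (fun l => A (τ.symm l)) := by
    ext y
    simp only [Set.mem_preimage, Set.mem_pi, Set.mem_univ, true_implies, Function.comp]
    constructor
    · intro h l
      have := h (τ.symm l)
      rwa [Equiv.apply_symm_apply] at this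
    · intro h i
      have := h (τ i)
      rwa [Equiv.symm_apply_apply] at this
  rw [hpre, Measure.pi_pi]
  exact Equiv.prod_comp τ.symm (fun l => μ (A l))

lemma measure_ordSet_eq [IsProbabilityMeasure μ] (τ : Equiv.Perm (Fin n)) :
    Measure.pi (fun _ : Fin n => μ) (ordSet n τ) =
      Measure.pi (fun _ : Fin n => μ) (ordSet n 1) := by
  have hmeas : Measurable (fun y : Fin n → ℝ => y ∘ τ) :=
    measurable_pi_lambda _ (fun i => measurable_pi_apply _)
  have hpre : ordSet n τ = (fun y : Fin n → ℝ => y ∘ τ) ⁻¹' (ordSet n 1) := by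
    ext y
    simp only [ordSet, Set.mem_preimage, Set.mem_setOf_eq]
    constructor
    · intro h
      have : (y ∘ τ) ∘ (1 : Equiv.Perm (Fin n)) = y ∘ τ := by
        ext i; simp
      rw [this]; exact h
    · intro h
      have : (y ∘ τ) ∘ (1 : Equiv.Perm (Fin n)) = y ∘ τ := by
        ext i; simp
      rw [this] at h; exact h
  rw [hpre, ← Measure.map_apply hmeas (measurableSet_ordSet n 1), map_comp_perm]

lemma ordSet_disjoint {τ τ' : Equiv.Perm (Fin n)} (h : τ ≠ τ') :
    Disjoint (ordSet n τ) (ordSet n τ') := by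
  rw [Set.disjoint_left]
  intro y hy hy'
  have h1 : StrictMono (y ∘ τ) := hy
  have h2 : StrictMono (y ∘ τ') := hy'
  have hyinj : Function.Injective y := by
    have h3 : Function.Injective ((y ∘ τ) ∘ (τ.symm : Fin n → Fin n)) :=
      h1.injective.comp (Equiv.injective _)
    have h4 : (y ∘ τ) ∘ (τ.symm : Fin n → Fin n) = y := by
      ext a; simp
    rwa [h4] at h3
  have hrange : Set.range (y ∘ τ) = Set.range (y ∘ τ') := by
    rw [Set.range_comp, Set.range_comp]
    rw [Set.range_eq_univ.mpr τ.surjective, Set.range_eq_univ.mpr τ'.surjective]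
  haveI : WellFoundedLT (Fin n) := inferInstance
  have := (h1.range_inj h2).mp hrange
  apply h
  ext i
  have hi := congrFun this i
  simp only [Function.comp] at hi
  exact congrArg Fin.val (hyinj hi)

lemma injective_mem_ordSet {y : Fin n → ℝ} (hy : Function.Injective y) :
    y ∈ ⋃ τ : Equiv.Perm (Fin n), ordSet n τ := by
  refine Set.mem_iUnion.mpr ⟨Tuple.sort y, ?_⟩
  have hmono := Tuple.monotone_sort y
  exact hmono.strictMono_of_injective (hy.comp (Tuple.sort y).injective)

lemma measure_ordSet [IsProbabilityMeasure μ] [NullSingletonClass μ] (τ : Equiv.Perm (Fin n)) :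
    Measure.pi (fun _ : Fin n => μ) (ordSet n τ) = ((n.factorial : ℝ≥0∞))⁻¹ := by
  classical
  set ν := Measure.pi (fun _ : Fin n => μ) with hν
  have hdisj : Pairwise (Function.onFun Disjoint fun τ : Equiv.Perm (Fin n) => ordSet n τ) :=
    fun τ₁ τ₂ h => ordSet_disjoint n h
  have hUnion : ν (⋃ τ : Equiv.Perm (Fin n), ordSet n τ) =
      ∑' τ : Equiv.Perm (Fin n), ν (ordSet n τ) :=
    measure_iUnion hdisj (fun τ => measurableSet_ordSet n τ)
  have hcover : ν (⋃ τ : Equiv.Perm (Fin n), ordSet n τ) = 1 := by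
    have hle : (1 : ℝ≥0∞) ≤ ν (⋃ τ : Equiv.Perm (Fin n), ordSet n τ) := by
      have : (Set.univ : Set (Fin n → ℝ)) ⊆
          (⋃ τ : Equiv.Perm (Fin n), ordSet n τ) ∪ {y | ¬ Function.Injective y} := by
        intro y _
        by_cases hy : Function.Injective y
        · exact Or.inl (injective_mem_ordSet n hy)
        · exact Or.inr hy
      calc (1 : ℝ≥0∞) = ν Set.univ := (measure_univ).symm
        _ ≤ ν ((⋃ τ : Equiv.Perm (Fin n), ordSet n τ) ∪ {y | ¬ Function.Injective y}) :=
            measure_mono this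
        _ ≤ ν (⋃ τ : Equiv.Perm (Fin n), ordSet n τ) + ν {y | ¬ Function.Injective y} :=
            measure_union_le _ _
        _ = ν (⋃ τ : Equiv.Perm (Fin n), ordSet n τ) := by
            rw [measure_not_injective μ n, add_zero]
    exact le_antisymm (prob_le_one) hle
  have hsum : ∑' τ' : Equiv.Perm (Fin n), ν (ordSet n τ') =
      (n.factorial : ℝ≥0∞) * ν (ordSet n 1) := by
    rw [tsum_fintype]
    calc ∑ τ' : Equiv.Perm (Fin n), ν (ordSet n τ')
        = ∑ _τ' : Equiv.Perm (Fin n), ν (ordSet n 1) :=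
          Finset.sum_congr rfl (fun τ' _ => measure_ordSet_eq μ n τ')
      _ = (Fintype.card (Equiv.Perm (Fin n))) * ν (ordSet n 1) := by
          rw [Finset.sum_const, Finset.card_univ, nsmul_eq_mul]
      _ = (n.factorial : ℝ≥0∞) * ν (ordSet n 1) := by
          rw [Fintype.card_perm, Fintype.card_fin]
  have hone : (n.factorial : ℝ≥0∞) * ν (ordSet n 1) = 1 := by
    rw [← hsum, ← hUnion, hcover]
  have hfac0 : ((n.factorial : ℕ) : ℝ≥0∞) ≠ 0 := Nat.cast_ne_zero.mpr n.factorial_ne_zero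
  have hfactop : ((n.factorial : ℕ) : ℝ≥0∞) ≠ ⊤ := ENNReal.natCast_ne_top _
  calc ν (ordSet n τ) = ν (ordSet n 1) := measure_ordSet_eq μ n τ
    _ = ((n.factorial : ℝ≥0∞))⁻¹ * ((n.factorial : ℝ≥0∞) * ν (ordSet n 1)) := by
        rw [← mul_assoc, ENNReal.inv_mul_cancel hfac0 hfactop, one_mul]
    _ = ((n.factorial : ℝ≥0∞))⁻¹ := by rw [hone, mul_one]

end OneDim

lemma measure_recEvent [IsProbabilityMeasure μ] [NullSingletonClass μ] (S : Finset ℕ) (hS : S ⊆ Finset.Icc 1 n) :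
    Measure.pi (fun _ : Fin n => μ) (recEvent n S) = ∏ m ∈ S, (m : ℝ≥0∞)⁻¹ := by
  classical
  set ν := Measure.pi (fun _ : Fin n => μ) with hν
  have hEOrd : ∀ τ : Equiv.Perm (Fin n), recEvent n S ∩ ordSet n τ =
      (if τ⁻¹ ∈ recPerms n S then ordSet n τ else ∅) := by
    intro τ
    split_ifs with hτ
    · refine Set.inter_eq_self_of_subset_right ?_
      intro y hy
      rw [mem_recPerms] at hτ
      simp only [recEvent, Set.mem_setOf_eq]
      intro p hp i hip
      have h1 : StrictMono (y ∘ τ) := hy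
      have h2 := h1 (hτ p hp i hip)
      simpa [Equiv.Perm.coe_inv] using h2
    · rw [Set.eq_empty_iff_forall_notMem]
      rintro y ⟨hyE, hyO⟩
      apply hτ
      rw [mem_recPerms]
      intro p hp i hip
      have h1 : StrictMono (y ∘ τ) := hyO
      have h0 : y i < y p := hyE p hp i hip
      have h2 : (y ∘ τ) (τ⁻¹ i) < (y ∘ τ) (τ⁻¹ p) := by
        simpa [Equiv.Perm.coe_inv] using h0
      exact h1.lt_iff_lt.mp h2
  have hdisj : Pairwise (Function.onFun Disjoint
      fun τ : Equiv.Perm (Fin n) => recEvent n S ∩ ordSet n τ) :=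
    fun τ₁ τ₂ h => ((ordSet_disjoint n h).mono Set.inter_subset_right Set.inter_subset_right)
  have hE : ν (recEvent n S) = ν (⋃ τ : Equiv.Perm (Fin n), recEvent n S ∩ ordSet n τ) := by
    apply le_antisymm
    · have hsub : recEvent n S ⊆
          (⋃ τ : Equiv.Perm (Fin n), recEvent n S ∩ ordSet n τ) ∪
            {y : Fin n → ℝ | ¬ Function.Injective y} := by
        intro y hy
        by_cases hinj : Function.Injective y
        · obtain ⟨τ, hτ⟩ := Set.mem_iUnion.mp (injective_mem_ordSet n hinj)
          exact Or.inl (Set.mem_iUnion.mpr ⟨τ, hy, hτ⟩)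
        · exact Or.inr hinj
      calc ν (recEvent n S) ≤
          ν ((⋃ τ : Equiv.Perm (Fin n), recEvent n S ∩ ordSet n τ) ∪
            {y : Fin n → ℝ | ¬ Function.Injective y}) := measure_mono hsub
        _ ≤ ν (⋃ τ : Equiv.Perm (Fin n), recEvent n S ∩ ordSet n τ) +
            ν {y : Fin n → ℝ | ¬ Function.Injective y} := measure_union_le _ _
        _ = ν (⋃ τ : Equiv.Perm (Fin n), recEvent n S ∩ ordSet n τ) := by
            rw [measure_not_injective μ n, add_zero]
    · exact measure_mono (Set.iUnion_subset fun τ => Set.inter_subset_left)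
  have hmeasEO : ∀ τ : Equiv.Perm (Fin n),
      MeasurableSet (recEvent n S ∩ ordSet n τ) :=
    fun τ => (measurableSet_recEvent n S).inter (measurableSet_ordSet n τ)
  rw [hE, measure_iUnion hdisj hmeasEO, tsum_fintype]
  have hterm : ∀ τ : Equiv.Perm (Fin n), ν (recEvent n S ∩ ordSet n τ) =
      (if τ⁻¹ ∈ recPerms n S then ((n.factorial : ℝ≥0∞))⁻¹ else 0) := by
    intro τ
    rw [hEOrd τ]
    split_ifs with h
    · exact measure_ordSet μ n τ
    · exact measure_empty
  simp_rw [hterm]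
  rw [← Finset.sum_filter, Finset.sum_const, nsmul_eq_mul]
  have hcardeq : (Finset.univ.filter
      (fun τ : Equiv.Perm (Fin n) => τ⁻¹ ∈ recPerms n S)).card = (recPerms n S).card := by
    refine Finset.card_bij (fun τ _ => τ⁻¹) ?_ ?_ ?_
    · intro τ hτ
      simpa using (Finset.mem_filter.mp hτ).2
    · intro τ₁ h₁ τ₂ h₂ h
      exact inv_injective h
    · intro σ hσ
      exact ⟨σ⁻¹, Finset.mem_filter.mpr ⟨Finset.mem_univ _, by simpa using hσ⟩, inv_inv σ⟩
  rw [hcardeq]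
  set g : ℕ := (recPerms n S).card with hgdef
  have hg := recPerms_card_mul n S hS
  have hg0 : g ≠ 0 := by
    intro h0
    rw [← hgdef] at hg
    rw [h0, zero_mul] at hg
    exact n.factorial_ne_zero hg.symm
  have hcast : (g : ℝ≥0∞) * ∏ m ∈ S, (m : ℝ≥0∞) = (n.factorial : ℝ≥0∞) := by
    rw [← hgdef] at hg
    have := congrArg (fun x : ℕ => (x : ℝ≥0∞)) hg
    push_cast at this
    exact this
  have hm0 : ∀ m ∈ S, (m : ℝ≥0∞) ≠ 0 := by
    intro m hm
    have h1 := (Finset.mem_Icc.mp (hS hm)).1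
    exact Nat.cast_ne_zero.mpr (by omega)
  have hprodne0 : (∏ m ∈ S, (m : ℝ≥0∞)) ≠ 0 := Finset.prod_ne_zero_iff.mpr hm0
  have hprodnetop : (∏ m ∈ S, (m : ℝ≥0∞)) ≠ ⊤ :=
    ENNReal.prod_ne_top (fun m _ => ENNReal.natCast_ne_top m)
  calc (g : ℝ≥0∞) * ((n.factorial : ℝ≥0∞))⁻¹
      = (g : ℝ≥0∞) * ((g : ℝ≥0∞) * ∏ m ∈ S, (m : ℝ≥0∞))⁻¹ := by rw [hcast]
    _ = (g : ℝ≥0∞) * ((g : ℝ≥0∞)⁻¹ * (∏ m ∈ S, (m : ℝ≥0∞))⁻¹) := by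
        rw [ENNReal.mul_inv (Or.inl (Nat.cast_ne_zero.mpr hg0)) (Or.inl (ENNReal.natCast_ne_top g))]
    _ = ((g : ℝ≥0∞) * (g : ℝ≥0∞)⁻¹) * (∏ m ∈ S, (m : ℝ≥0∞))⁻¹ := by ring
    _ = (∏ m ∈ S, (m : ℝ≥0∞))⁻¹ := by
        rw [ENNReal.mul_inv_cancel (Nat.cast_ne_zero.mpr hg0) (ENNReal.natCast_ne_top g), one_mul]
    _ = ∏ m ∈ S, (m : ℝ≥0∞)⁻¹ :=
        ENNReal.prod_inv_distrib (fun m hm _ _ _ => Or.inl (hm0 m hm))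

lemma mem_recEvent_iff {n : ℕ} {S : Finset ℕ} {y : Fin n → ℝ} :
    y ∈ recEvent n S ↔ ∀ p : Fin n, (p : ℕ) + 1 ∈ S → ∀ i : Fin n, i < p → y i < y p :=
  Iff.rfl

/-- For `d ≥ 2` and every `k ≥ 1`,
`P(T = k) = k⁻ᵈ * ∏_{m ≥ k+1} (1 - m⁻ᵈ)`. -/
theorem terminal_record_index_distribution
    {Ω : Type*} [MeasurableSpace Ω] (P : Measure Ω) [IsProbabilityMeasure P]
    (d : ℕ) (hd : 2 ≤ d) (X : ℕ → Ω → Fin d → ℝ)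
    (hmeas : ∀ m, Measurable (X m))
    (hindep : iIndepFun (fun m : ℕ => X (m + 1)) P)
    (hident : ∀ m : ℕ, P.map (X (m + 1)) = P.map (X 1))
    (hcomp : iIndepFun (fun (j : Fin d) ω => X 1 ω j) P)
    (hcont : ∀ j : Fin d, Continuous fun t : ℝ => (P {ω | X 1 ω j ≤ t}).toReal)
    (k : ℕ) (hk : 1 ≤ k) :
    (P {ω | terminalRecordIndex X ω = k}).toReal =
      (1 / (k : ℝ) ^ d) * ∏' m : ℕ, (1 - 1 / ((m + k + 1 : ℕ) : ℝ) ^ d) := by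
  classical
  -- coordinate laws of X 1
  set μj : Fin d → Measure ℝ := fun j => P.map (fun ω => X 1 ω j) with hμj
  have hmeasX1j : ∀ j : Fin d, Measurable fun ω => X 1 ω j :=
    fun j => (measurable_pi_apply j).comp (hmeas 1)
  haveI hprobj : ∀ j, IsProbabilityMeasure (μj j) :=
    fun j => Measure.isProbabilityMeasure_map (hmeasX1j j).aemeasurable
  have hIic : ∀ (j : Fin d) (t : ℝ), μj j (Set.Iic t) = P {ω | X 1 ω j ≤ t} := by
    intro j t
    rw [hμj]
    rw [Measure.map_apply (hmeasX1j j) measurableSet_Iic]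
    rfl
  haveI hnoatom : ∀ j, NullSingletonClass (μj j) := by
    intro j
    constructor
    intro x
    have hsingle_le : ∀ n : ℕ, (μj j {x}).toReal ≤
        (P {ω | X 1 ω j ≤ x}).toReal - (P {ω | X 1 ω j ≤ x - 1/(n+1)}).toReal := by
      intro n
      have hlt : x - 1/((n:ℝ)+1) < x := by
        have : (0:ℝ) < 1/((n:ℝ)+1) := by positivity
        linarith
      have hsub : {x} ⊆ Set.Ioc (x - 1/((n:ℝ)+1)) x := by
        intro y hy
        simp only [Set.mem_singleton_iff] at hy
        subst hy
        exact ⟨hlt, le_rfl⟩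
      have h2 : μj j {x} ≤ μj j (Set.Ioc (x - 1/((n:ℝ)+1)) x) := measure_mono hsub
      have hunion : Set.Iic x = Set.Iic (x - 1/((n:ℝ)+1)) ∪ Set.Ioc (x - 1/((n:ℝ)+1)) x := by
        rw [Set.Iic_union_Ioc_eq_Iic hlt.le]
      have hdisj : Disjoint (Set.Iic (x - 1/((n:ℝ)+1))) (Set.Ioc (x - 1/((n:ℝ)+1)) x) :=
        Set.Iic_disjoint_Ioc le_rfl
      have hadd : μj j (Set.Iic x) =
          μj j (Set.Iic (x - 1/((n:ℝ)+1))) + μj j (Set.Ioc (x - 1/((n:ℝ)+1)) x) := by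
        rw [hunion, measure_union hdisj measurableSet_Ioc]
      have haddR : (μj j (Set.Iic x)).toReal =
          (μj j (Set.Iic (x - 1/((n:ℝ)+1)))).toReal +
            (μj j (Set.Ioc (x - 1/((n:ℝ)+1)) x)).toReal := by
        rw [hadd, ENNReal.toReal_add (measure_ne_top _ _) (measure_ne_top _ _)]
      have h2R : (μj j {x}).toReal ≤ (μj j (Set.Ioc (x - 1/((n:ℝ)+1)) x)).toReal :=
        ENNReal.toReal_mono (measure_ne_top _ _) h2
      rw [← hIic j x, ← hIic j (x - 1/((n:ℝ)+1))]
      push_cast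
      linarith
    have htend : Tendsto (fun n : ℕ =>
        (P {ω | X 1 ω j ≤ x}).toReal - (P {ω | X 1 ω j ≤ x - 1/(n+1)}).toReal)
        atTop (𝓝 0) := by
      have h1 : Tendsto (fun n : ℕ => x - 1/((n:ℝ)+1)) atTop (𝓝 x) := by
        have := tendsto_one_div_add_atTop_nhds_zero_nat (𝕜 := ℝ)
        have h2 := (tendsto_const_nhds : Tendsto (fun _ : ℕ => x) atTop (𝓝 x)).sub this
        simpa using h2
      have h2 := ((hcont j).continuousAt (x := x)).tendsto.comp h1
      have h3 := (tendsto_const_nhds :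
        Tendsto (fun _ : ℕ => (P {ω | X 1 ω j ≤ x}).toReal) atTop
          (𝓝 ((P {ω | X 1 ω j ≤ x}).toReal))).sub h2
      simpa using h3
    have hle : (μj j {x}).toReal ≤ 0 := ge_of_tendsto htend (Eventually.of_forall hsingle_le)
    have h0 : (μj j {x}).toReal = 0 :=
      le_antisymm hle ENNReal.toReal_nonneg
    rw [ENNReal.toReal_eq_zero_iff] at h0
    rcases h0 with h | h
    · exact h
    · exact absurd h (measure_ne_top _ _)
  -- law of X 1 is the product of coordinate laws
  have hX1law : P.map (X 1) = Measure.pi μj := by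
    refine (Measure.pi_eq ?_).symm
    intro A hA
    rw [Measure.map_apply (hmeas 1) (MeasurableSet.univ_pi hA)]
    have hpre : (X 1) ⁻¹' (Set.pi Set.univ A) =
        ⋂ j ∈ (Finset.univ : Finset (Fin d)), (fun ω => X 1 ω j) ⁻¹' (A j) := by
      ext ω
      simp [Set.mem_pi]
    rw [hpre, hcomp.measure_inter_preimage_eq_mul Finset.univ (fun j _ => hA j)]
    refine Finset.prod_congr rfl fun j _ => ?_
    rw [hμj, Measure.map_apply (hmeasX1j j) (hA j)]
  -- the matrix of the first n observations and its law
  haveI hsfin : ∀ j, SigmaFinite (μj j) := fun j => inferInstance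
  have hWmeas : ∀ n : ℕ, Measurable (fun ω (j : Fin d) (i : Fin n) => X ((i : ℕ) + 1) ω j) :=
    fun n => measurable_pi_lambda _ fun j => measurable_pi_lambda _ fun i =>
      (measurable_pi_apply j).comp (hmeas ((i : ℕ) + 1))
  have hWlaw : ∀ n : ℕ,
      P.map (fun ω (j : Fin d) (i : Fin n) => X ((i : ℕ) + 1) ω j) =
        Measure.pi (fun j => Measure.pi (fun _ : Fin n => μj j)) := by
    intro n
    set W : Ω → (Fin d → Fin n → ℝ) := fun ω j i => X ((i : ℕ) + 1) ω j with hW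
    set C : Fin d → Set (Set (Fin n → ℝ)) := fun _ =>
      Set.pi Set.univ '' Set.pi Set.univ (fun _ : Fin n => {s : Set ℝ | MeasurableSet s})
      with hC
    have huniv_mem : ∀ j, (Set.univ : Set (Fin n → ℝ)) ∈ C j := by
      intro j
      refine ⟨fun _ => Set.univ, fun i _ => ?_, by simp⟩
      simp only [Set.mem_setOf_eq]
      exact MeasurableSet.univ
    refine (Measure.pi_eq_generateFrom (C := C)
      (fun _ => generateFrom_pi)
      (fun _ => IsPiSystem.pi (fun _ => MeasurableSpace.isPiSystem_measurableSet))
      (fun j => ⟨fun _ => Set.univ, fun _ => huniv_mem j, fun _ => by simp [measure_lt_top],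
        Set.iUnion_const _⟩) ?_).symm
    intro s hs
    choose A hAmem hAeq using hs
    have hAmeas : ∀ (j : Fin d) (i : Fin n), MeasurableSet (A j i) := by
      intro j i
      exact hAmem j i (Set.mem_univ i)
    have hsmeas : ∀ j, MeasurableSet (s j) := by
      intro j
      rw [← hAeq j]
      exact MeasurableSet.univ_pi (hAmeas j)
    set A' : Fin d → ℕ → Set ℝ := fun j m => if h : m < n then A j ⟨m, h⟩ else Set.univ
      with hA'
    set B : ℕ → Set (Fin d → ℝ) := fun m => Set.pi Set.univ (fun j => A' j m) with hB
    have hBmeas : ∀ m, MeasurableSet (B m) := by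
      intro m
      refine MeasurableSet.univ_pi fun j => ?_
      rw [hA']
      dsimp only
      split_ifs with h
      · exact hAmeas j ⟨m, h⟩
      · exact MeasurableSet.univ
    rw [Measure.map_apply (hWmeas n) (MeasurableSet.univ_pi hsmeas)]
    have hpre : W ⁻¹' (Set.pi Set.univ s) =
        ⋂ m ∈ Finset.range n, (fun ω => X (m + 1) ω) ⁻¹' (B m) := by
      ext ω
      simp only [Set.mem_preimage, Set.mem_iInter, Finset.mem_range]
      constructor
      · intro h m hm
        show X (m + 1) ω ∈ B m
        refine Set.mem_univ_pi.mpr fun j => ?_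
        have h2 : (fun i : Fin n => X ((i : ℕ) + 1) ω j) ∈ s j :=
          Set.mem_univ_pi.mp h j
        rw [← hAeq j] at h2
        have h3 := Set.mem_univ_pi.mp h2 ⟨m, hm⟩
        show X (m + 1) ω j ∈ A' j m
        have hAA : A' j m = A j ⟨m, hm⟩ := by
          rw [hA']
          dsimp only
          rw [dif_pos hm]
        rw [hAA]
        exact h3
      · intro h
        refine Set.mem_univ_pi.mpr fun j => ?_
        show (fun i : Fin n => X ((i : ℕ) + 1) ω j) ∈ s j
        rw [← hAeq j]
        refine Set.mem_univ_pi.mpr fun i => ?_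
        have h2 := Set.mem_univ_pi.mp (h (i : ℕ) i.isLt) j
        have hAA : A' j (i : ℕ) = A j i := by
          rw [hA']
          dsimp only
          rw [dif_pos i.isLt]
        rw [hAA] at h2
        simpa using h2
    rw [hpre, hindep.measure_inter_preimage_eq_mul (Finset.range n) (fun m _ => hBmeas m)]
    have hfac : ∀ m ∈ Finset.range n, P ((fun ω => X (m + 1) ω) ⁻¹' (B m)) =
        ∏ j, μj j (A' j m) := by
      intro m _
      have h1 : P ((fun ω => X (m + 1) ω) ⁻¹' (B m)) = (P.map (X (m + 1))) (B m) := by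
        rw [Measure.map_apply (hmeas (m + 1)) (hBmeas m)]
      rw [h1, hident m, hX1law, hB]
      exact Measure.pi_pi μj _
    rw [Finset.prod_congr rfl hfac, Finset.prod_comm]
    refine Finset.prod_congr rfl fun j _ => ?_
    rw [← hAeq j, Measure.pi_pi]
    rw [← Fin.prod_univ_eq_prod_range (fun m => μj j (A' j m)) n]
    refine Finset.prod_congr rfl fun i _ => ?_
    have hAA : A' j (i : ℕ) = A j i := by
      rw [hA']
      dsimp only
      rw [dif_pos i.isLt]
    rw [hAA]
  -- record events
  set R : ℕ → Set Ω := fun m => {ω | IsCompleteRecord X m ω} with hRdef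
  have hRmeas : ∀ m, MeasurableSet (R m) := by
    intro m
    have : R m = ⋂ (i : ℕ), ⋂ (_ : 1 ≤ i), ⋂ (_ : i < m), ⋂ (j : Fin d),
        {ω | X i ω j < X m ω j} := by
      ext ω
      simp only [hRdef, IsCompleteRecord, Set.mem_setOf_eq, Set.mem_iInter]
    rw [this]
    exact MeasurableSet.iInter fun i => MeasurableSet.iInter fun _ =>
      MeasurableSet.iInter fun _ => MeasurableSet.iInter fun j =>
        measurableSet_lt ((measurable_pi_apply j).comp (hmeas i))
          ((measurable_pi_apply j).comp (hmeas m))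
  have hRn : ∀ (n : ℕ) (S : Finset ℕ), S ⊆ Finset.Icc 1 n →
      P (⋂ m ∈ S, R m) = (∏ m ∈ S, (m : ℝ≥0∞)⁻¹) ^ d := by
    intro n S hSsub
    have hpre : (⋂ m ∈ S, R m) =
        (fun ω (j : Fin d) (i : Fin n) => X ((i : ℕ) + 1) ω j) ⁻¹'
          (Set.pi Set.univ (fun _ : Fin d => recEvent n S)) := by
      ext ω
      simp only [Set.mem_iInter, Set.mem_preimage]
      constructor
      · intro h
        refine Set.mem_univ_pi.mpr fun j => ?_
        rw [mem_recEvent_iff]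
        intro p hp i hip
        have hrec := h ((p : ℕ) + 1) hp
        rw [hRdef] at hrec
        exact hrec ((i : ℕ) + 1) (by omega) (by have := (Fin.lt_def.mp hip); omega) j
      · intro h m hm
        have h1m : 1 ≤ m := (Finset.mem_Icc.mp (hSsub hm)).1
        have hmn : m ≤ n := (Finset.mem_Icc.mp (hSsub hm)).2
        rw [hRdef]
        intro i h1i him j
        have h2 := Set.mem_univ_pi.mp h j
        rw [mem_recEvent_iff] at h2
        have hp : (m - 1) < n := by omega
        have hi : (i - 1) < n := by omega
        have hmem : ((⟨m - 1, hp⟩ : Fin n) : ℕ) + 1 ∈ S := by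
          show m - 1 + 1 ∈ S
          have : m - 1 + 1 = m := by omega
          rw [this]
          exact hm
        have hlt : (⟨i - 1, hi⟩ : Fin n) < ⟨m - 1, hp⟩ := by
          rw [Fin.lt_def]
          show i - 1 < m - 1
          omega
        have h3 := h2 ⟨m - 1, hp⟩ hmem ⟨i - 1, hi⟩ hlt
        simp only at h3
        have hie : i - 1 + 1 = i := by omega
        have hme : m - 1 + 1 = m := by omega
        rw [hie, hme] at h3
        exact h3
    rw [hpre, ← Measure.map_apply (hWmeas n)
      (MeasurableSet.univ_pi fun _ => measurableSet_recEvent n S), hWlaw n, Measure.pi_pi]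
    have hval : ∀ j : Fin d, Measure.pi (fun _ : Fin n => μj j) (recEvent n S) =
        ∏ m ∈ S, (m : ℝ≥0∞)⁻¹ := by
      intro j
      haveI := hprobj j
      haveI := hnoatom j
      exact measure_recEvent (μ := μj j) (n := n) S hSsub
    rw [Finset.prod_congr rfl fun j _ => hval j, Finset.prod_const, Finset.card_univ,
      Fintype.card_fin]
  -- real-valued product formula
  have hptoReal : ∀ S : Finset ℕ, (∀ m ∈ S, 1 ≤ m) →
      (P (⋂ m ∈ S, R m)).toReal = ∏ m ∈ S, (((m : ℝ)) ^ d)⁻¹ := by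
    intro S hS1
    have hSsub : S ⊆ Finset.Icc 1 (S.sup id) := by
      intro m hm
      rw [Finset.mem_Icc]
      exact ⟨hS1 m hm, Finset.le_sup (f := id) hm⟩
    rw [hRn (S.sup id) S hSsub, ENNReal.toReal_pow, ENNReal.toReal_prod, ← Finset.prod_pow]
    refine Finset.prod_congr rfl fun m hm => ?_
    simp [ENNReal.toReal_inv, ← inv_pow]
  -- with complements
  have hcompl : ∀ (S : Finset ℕ), (∀ m ∈ S, 1 ≤ m) → ∀ (T : Finset ℕ), (∀ m ∈ T, 1 ≤ m) →
      Disjoint T S →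
      (P ((⋂ m ∈ T, R m) ∩ (⋂ m ∈ S, (R m)ᶜ))).toReal =
        (∏ m ∈ T, (((m : ℝ)) ^ d)⁻¹) * ∏ m ∈ S, (1 - (((m : ℝ)) ^ d)⁻¹) := by
    intro S
    induction S using Finset.induction_on with
    | empty =>
      intro _ T hT _
      have : (⋂ m ∈ (∅ : Finset ℕ), (R m)ᶜ) = Set.univ := by
        simp
      rw [this, Set.inter_univ, Finset.prod_empty, mul_one]
      exact hptoReal T hT
    | @insert a S ha ih =>
      intro hins T hT hdisj
      have haS : 1 ≤ a := hins a (Finset.mem_insert_self a S)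
      have hS1 : ∀ m ∈ S, 1 ≤ m := fun m hm => hins m (Finset.mem_insert_of_mem hm)
      have hdisjS : Disjoint T S :=
        hdisj.mono_right (Finset.subset_insert a S)
      have haT : a ∉ T := by
        intro haT
        exact (Finset.disjoint_left.mp hdisj) haT (Finset.mem_insert_self a S)
      set s : Set Ω := (⋂ m ∈ T, R m) ∩ (⋂ m ∈ S, (R m)ᶜ) with hs
      have hsmeas' : MeasurableSet s := by
        refine MeasurableSet.inter ?_ ?_
        · exact MeasurableSet.biInter (Finset.countable_toSet T) fun m _ => hRmeas m
        · exact MeasurableSet.biInter (Finset.countable_toSet S) fun m _ => (hRmeas m).compl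
      have hsplit : P s = P (s ∩ R a) + P (s \ R a) := (measure_inter_add_diff s (hRmeas a)).symm
      have hset1 : (⋂ m ∈ T, R m) ∩ (⋂ m ∈ insert a S, (R m)ᶜ) = s \ R a := by
        ext ω
        simp only [hs, Set.mem_inter_iff, Set.mem_iInter, Set.mem_diff, Set.mem_compl_iff,
          Finset.mem_insert]
        constructor
        · rintro ⟨h1, h2⟩
          exact ⟨⟨h1, fun m hm => h2 m (Or.inr hm)⟩, h2 a (Or.inl rfl)⟩
        · rintro ⟨⟨h1, h2⟩, h3⟩
          refine ⟨h1, fun m hm => ?_⟩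
          rcases hm with rfl | hm
          · exact h3
          · exact h2 m hm
      have hset2 : s ∩ R a = (⋂ m ∈ insert a T, R m) ∩ (⋂ m ∈ S, (R m)ᶜ) := by
        ext ω
        simp only [hs, Set.mem_inter_iff, Set.mem_iInter, Finset.mem_insert]
        constructor
        · rintro ⟨⟨h1, h2⟩, h3⟩
          refine ⟨fun m hm => ?_, h2⟩
          rcases hm with rfl | hm
          · exact h3
          · exact h1 m hm
        · rintro ⟨h1, h2⟩
          exact ⟨⟨fun m hm => h1 m (Or.inr hm), h2⟩, h1 a (Or.inl rfl)⟩
      have htoReal : (P s).toReal = (P (s ∩ R a)).toReal + (P (s \ R a)).toReal := by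
        rw [hsplit, ENNReal.toReal_add (measure_ne_top _ _) (measure_ne_top _ _)]
      have hPs : (P s).toReal =
          (∏ m ∈ T, (((m : ℝ)) ^ d)⁻¹) * ∏ m ∈ S, (1 - (((m : ℝ)) ^ d)⁻¹) :=
        ih hS1 T hT hdisjS
      have hPsa : (P (s ∩ R a)).toReal =
          ((((a : ℝ)) ^ d)⁻¹ * ∏ m ∈ T, (((m : ℝ)) ^ d)⁻¹) *
            ∏ m ∈ S, (1 - (((m : ℝ)) ^ d)⁻¹) := by
        rw [hset2, ih hS1 (insert a T)
          (fun m hm => by rcases Finset.mem_insert.mp hm with rfl | hm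
                          · exact haS
                          · exact hT m hm)
          (by rw [Finset.disjoint_left]
              intro m hm hmS
              rcases Finset.mem_insert.mp hm with rfl | hm2
              · exact ha hmS
              · exact (Finset.disjoint_left.mp hdisjS) hm2 hmS)]
        rw [Finset.prod_insert haT]
      rw [hset1]
      have : (P (s \ R a)).toReal = (P s).toReal - (P (s ∩ R a)).toReal := by
        rw [htoReal]; ring
      rw [this, hPs, hPsa, Finset.prod_insert ha]
      ring
  -- the event {T = k}
  have hTset : {ω | terminalRecordIndex X ω = k} =
      R k ∩ ⋂ (m : ℕ), ⋂ (_ : k < m), (R m)ᶜ := by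
    ext ω
    simp only [Set.mem_setOf_eq, Set.mem_inter_iff, Set.mem_iInter, Set.mem_compl_iff, hRdef]
    constructor
    · intro hsup
      have hone : (1 : ℕ) ∈ {m : ℕ | 1 ≤ m ∧ IsCompleteRecord X m ω} := by
        refine ⟨le_rfl, ?_⟩
        intro i h1 h2 j
        omega
      have hne : {m : ℕ | 1 ≤ m ∧ IsCompleteRecord X m ω}.Nonempty := ⟨1, hone⟩
      have hbdd : BddAbove {m : ℕ | 1 ≤ m ∧ IsCompleteRecord X m ω} := by
        by_contra hb
        rw [terminalRecordIndex, csSup_of_not_bddAbove hb] at hsup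
        simp at hsup
        omega
      have hmem := Nat.sSup_mem hne hbdd
      rw [terminalRecordIndex] at hsup
      rw [hsup] at hmem
      refine ⟨hmem.2, ?_⟩
      intro m hkm hrec
      have hle : m ≤ k := by
        have h2 := le_csSup hbdd (show m ∈ {m : ℕ | 1 ≤ m ∧ IsCompleteRecord X m ω} from
          ⟨by omega, hrec⟩)
        rwa [hsup] at h2
      omega
    · rintro ⟨hreck, hno⟩
      rw [terminalRecordIndex]
      have hub : ∀ m ∈ {m : ℕ | 1 ≤ m ∧ IsCompleteRecord X m ω}, m ≤ k := by
        intro m hm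
        by_contra hmk
        exact hno m (by omega) hm.2
      apply le_antisymm
      · exact csSup_le ⟨k, hk, hreck⟩ hub
      · exact le_csSup ⟨k, hub⟩ ⟨hk, hreck⟩
  -- decreasing approximation
  set D : ℕ → Set Ω := fun N => R k ∩ ⋂ m ∈ Finset.Ioc k (k + 1 + N), (R m)ᶜ with hDdef
  have hDiInter : (⋂ N, D N) = R k ∩ ⋂ (m : ℕ), ⋂ (_ : k < m), (R m)ᶜ := by
    ext ω
    simp only [hDdef, Set.mem_iInter, Set.mem_inter_iff, Finset.mem_Ioc, Set.mem_compl_iff]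
    constructor
    · intro h
      refine ⟨(h 0).1, ?_⟩
      intro m hm
      exact (h m).2 m ⟨hm, by omega⟩
    · intro h N
      exact ⟨h.1, fun m hm => h.2 m hm.1⟩
  have hDmeas : ∀ N, MeasurableSet (D N) := by
    intro N
    exact (hRmeas k).inter (MeasurableSet.biInter (Finset.countable_toSet _)
      fun m _ => (hRmeas m).compl)
  have hDanti : Antitone D := by
    intro N N' hNN'
    rw [hDdef]
    refine Set.inter_subset_inter subset_rfl ?_
    intro ω hω
    simp only [Set.mem_iInter, Finset.mem_Ioc] at hω ⊢
    intro m hm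
    exact hω m ⟨hm.1, by omega⟩
  have htendD : Tendsto (fun N => P (D N)) atTop (𝓝 (P (⋂ N, D N))) :=
    tendsto_measure_iInter_atTop (fun N => (hDmeas N).nullMeasurableSet) hDanti
      ⟨0, measure_ne_top _ _⟩
  have htendDR : Tendsto (fun N => (P (D N)).toReal) atTop (𝓝 ((P (⋂ N, D N)).toReal)) :=
    (ENNReal.tendsto_toReal (measure_ne_top _ _)).comp htendD
  -- value of P (D N)
  have hDval : ∀ N : ℕ, (P (D N)).toReal =
      (((k : ℝ)) ^ d)⁻¹ * ∏ i ∈ Finset.range (N + 1), (1 - 1 / ((i + k + 1 : ℕ) : ℝ) ^ d) := by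
    intro N
    have hsingle : (⋂ m ∈ ({k} : Finset ℕ), R m) = R k := by
      simp
    have h1 : (P (D N)).toReal =
        (∏ m ∈ ({k} : Finset ℕ), (((m : ℝ)) ^ d)⁻¹) *
          ∏ m ∈ Finset.Ioc k (k + 1 + N), (1 - (((m : ℝ)) ^ d)⁻¹) := by
      rw [hDdef]
      dsimp only
      rw [← hsingle]
      refine hcompl (Finset.Ioc k (k + 1 + N)) ?_ {k} ?_ ?_
      · intro m hm
        have := Finset.mem_Ioc.mp hm
        omega
      · intro m hm
        rw [Finset.mem_singleton.mp hm]
        exact hk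
      · rw [Finset.disjoint_left]
        intro m hm hm2
        rw [Finset.mem_singleton.mp hm] at hm2
        have := Finset.mem_Ioc.mp hm2
        omega
    rw [h1, Finset.prod_singleton]
    congr 1
    have hIco : Finset.Ioc k (k + 1 + N) = Finset.Ico (k + 1) (k + 1 + N + 1) := by
      ext m
      simp only [Finset.mem_Ioc, Finset.mem_Ico]
      omega
    rw [hIco, Finset.prod_Ico_eq_prod_range]
    have hlen : k + 1 + N + 1 - (k + 1) = N + 1 := by omega
    rw [hlen]
    refine Finset.prod_congr rfl fun i _ => ?_
    have harg : k + 1 + i = i + k + 1 := by omega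
    rw [harg, one_div]
  -- the infinite product
  set f : ℕ → ℝ := fun m => 1 - 1 / ((m + k + 1 : ℕ) : ℝ) ^ d with hfdef
  have hf01 : ∀ m, 0 ≤ f m ∧ f m ≤ 1 := by
    intro m
    have hb : (1 : ℝ) ≤ ((m + k + 1 : ℕ) : ℝ) := by
      have : (1 : ℕ) ≤ m + k + 1 := by omega
      exact_mod_cast this
    have hpow : (1 : ℝ) ≤ ((m + k + 1 : ℕ) : ℝ) ^ d := one_le_pow₀ hb
    have hpos : (0 : ℝ) < ((m + k + 1 : ℕ) : ℝ) ^ d := by positivity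
    constructor
    · rw [hfdef]
      dsimp only
      have : 1 / ((m + k + 1 : ℕ) : ℝ) ^ d ≤ 1 := by
        rw [div_le_one hpos]
        exact hpow
      linarith
    · rw [hfdef]
      dsimp only
      have : 0 < 1 / ((m + k + 1 : ℕ) : ℝ) ^ d := by positivity
      linarith
  have hanti2 : Antitone (fun s : Finset ℕ => ∏ i ∈ s, f i) := by
    intro s t hst
    dsimp only
    rw [← Finset.prod_sdiff hst]
    have h1 : ∏ i ∈ t \ s, f i ≤ 1 :=
      Finset.prod_le_one (fun i _ => (hf01 i).1) (fun i _ => (hf01 i).2)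
    have h2 : 0 ≤ ∏ i ∈ s, f i := Finset.prod_nonneg fun i _ => (hf01 i).1
    calc (∏ i ∈ t \ s, f i) * ∏ i ∈ s, f i ≤ 1 * ∏ i ∈ s, f i :=
          mul_le_mul_of_nonneg_right h1 h2
      _ = ∏ i ∈ s, f i := one_mul _
  have hbdd2 : BddBelow (Set.range fun s : Finset ℕ => ∏ i ∈ s, f i) := by
    refine ⟨0, ?_⟩
    rintro x ⟨s, rfl⟩
    exact Finset.prod_nonneg fun i _ => (hf01 i).1
  have hHasProd : HasProd f (⨅ s : Finset ℕ, ∏ i ∈ s, f i) :=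
    tendsto_atTop_ciInf hanti2 hbdd2
  have htprod : ∏' m, f m = ⨅ s : Finset ℕ, ∏ i ∈ s, f i := hHasProd.tprod_eq
  have hnat : Tendsto (fun N => ∏ i ∈ Finset.range N, f i) atTop
      (𝓝 (⨅ s : Finset ℕ, ∏ i ∈ s, f i)) := hHasProd.tendsto_prod_nat
  have hnat1 : Tendsto (fun N => ∏ i ∈ Finset.range (N + 1), f i) atTop
      (𝓝 (⨅ s : Finset ℕ, ∏ i ∈ s, f i)) := hnat.comp (tendsto_add_atTop_nat 1)
  have htendval : Tendsto (fun N => (P (D N)).toReal) atTop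
      (𝓝 ((((k : ℝ)) ^ d)⁻¹ * ⨅ s : Finset ℕ, ∏ i ∈ s, f i)) := by
    have := hnat1.const_mul ((((k : ℝ)) ^ d)⁻¹)
    refine this.congr fun N => ?_
    rw [← hDval N]
  have hfinal : (P (⋂ N, D N)).toReal =
      (((k : ℝ)) ^ d)⁻¹ * ⨅ s : Finset ℕ, ∏ i ∈ s, f i :=
    tendsto_nhds_unique htendDR htendval
  rw [hTset, ← hDiInter, hfinal, ← htprod, one_div]

end
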